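/- arXiv:1902.07893 — 2 statements merged into one kernel-verified Lean document; each statement's English description precedes it below -/
import Mathlib

section
/- Let Φ : K → K be the map of the Kac–Paljutkin algebra K = ℂε ⊕ ℂα' ⊕ ℂβ' ⊕ ℂγ' ⊕ M₂(ℂ) to K = ℂε ⊕ ℂα ⊕ ℂβ ⊕ ℂγ ⊕ M₂(ℂ) sending the idempotents (ε, α', β', γ') to (ε, γ, α, β) and x ∈ M₂(ℂ) to vxv* with v = diag(−1, i). Then Φ is a unital *-algebra isomorphism and (Φ ⊗ Φ) ∘ Δ_gr = Δ_KP ∘ Φ, where Δ_gr and Δ_KP are the comultiplications defined below. In particular the graded-twisted coalgebra (K, Δ_gr) is isomorphic as a Hopf *-algebra to the Kac–Paljutkin algebra (K, Δ_KP). -/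
open TensorProduct Matrix Complex
noncomputable section
set_option synthInstance.maxHeartbeats 1000000
set_option maxHeartbeats 1000000

/-- 2×2 complex matrices. -/
abbrev M2 : Type := Matrix (Fin 2) (Fin 2) ℂ

/-- The underlying algebra of the Kac–Paljutkin algebra: `ℂ × ℂ × ℂ × ℂ × M₂(ℂ)`. -/
abbrev KP : Type := ℂ × ℂ × ℂ × ℂ × M2

/-- The central idempotent ε. -/
def εK : KP := (1,0,0,0,0)
/-- The central idempotent α. -/
def αK : KP := (0,1,0,0,0)
/-- The central idempotent β. -/
def βK : KP := (0,0,1,0,0)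
/-- The central idempotent γ. -/
def γK : KP := (0,0,0,1,0)

/-- Matrix units of `M₂(ℂ)`. -/
def eM (i j : Fin 2) : M2 := Matrix.single i j 1

/-- The matrix units of the `M₂(ℂ)` summand, viewed inside `KP`. -/
def εKij (i j : Fin 2) : KP := (0,0,0,0, eM i j)

def uA : M2 := !![0, I; 1, 0]
def uB : M2 := !![0, 1; I, 0]
def uC : M2 := !![-1, 0; 0, 1]

/-- Embedding of the matrix summand, as a linear map. -/
def mLin : M2 →ₗ[ℂ] KP where
  toFun x := (0,0,0,0,x)
  map_add' x y := by simp [Prod.ext_iff]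
  map_smul' c x := by simp [Prod.ext_iff]

def pε : KP →ₗ[ℂ] ℂ := LinearMap.fst ℂ ℂ _
def pα : KP →ₗ[ℂ] ℂ := (LinearMap.fst ℂ ℂ _) ∘ₗ (LinearMap.snd ℂ ℂ _)
def pβ : KP →ₗ[ℂ] ℂ :=
  (LinearMap.fst ℂ ℂ _) ∘ₗ (LinearMap.snd ℂ ℂ _) ∘ₗ (LinearMap.snd ℂ ℂ _)
def pγ : KP →ₗ[ℂ] ℂ :=
  (LinearMap.fst ℂ ℂ _) ∘ₗ (LinearMap.snd ℂ ℂ _) ∘ₗ (LinearMap.snd ℂ ℂ _) ∘ₗ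
    (LinearMap.snd ℂ ℂ _)
def pM : KP →ₗ[ℂ] M2 :=
  (LinearMap.snd ℂ ℂ _) ∘ₗ (LinearMap.snd ℂ ℂ _) ∘ₗ (LinearMap.snd ℂ ℂ _) ∘ₗ
    (LinearMap.snd ℂ ℂ _)

/-- Conjugation `x ↦ u x u*` by a fixed matrix, as a linear map. -/
def conjBy (u : M2) : M2 →ₗ[ℂ] M2 := (LinearMap.mulLeft ℂ u) ∘ₗ (LinearMap.mulRight ℂ uᴴ)

/-- Entrywise complex conjugate of a matrix. -/
def cconj (u : M2) : M2 := u.map (starRingEnd ℂ)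

/-- Value of the comultiplication on ε. -/
def Dε : KP ⊗[ℂ] KP :=
  εK ⊗ₜ[ℂ] εK + αK ⊗ₜ[ℂ] αK + βK ⊗ₜ[ℂ] βK + γK ⊗ₜ[ℂ] γK +
    (2⁻¹ : ℂ) • (εKij 0 0 ⊗ₜ[ℂ] εKij 0 0 + εKij 0 1 ⊗ₜ[ℂ] εKij 0 1 +
      εKij 1 0 ⊗ₜ[ℂ] εKij 1 0 + εKij 1 1 ⊗ₜ[ℂ] εKij 1 1)

/-- Value of the comultiplication on α. -/
def Dα : KP ⊗[ℂ] KP :=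
  εK ⊗ₜ[ℂ] αK + αK ⊗ₜ[ℂ] εK + βK ⊗ₜ[ℂ] γK + γK ⊗ₜ[ℂ] βK +
    (2⁻¹ : ℂ) • (εKij 0 0 ⊗ₜ[ℂ] εKij 1 1 + I • (εKij 0 1 ⊗ₜ[ℂ] εKij 1 0) -
      I • (εKij 1 0 ⊗ₜ[ℂ] εKij 0 1) + εKij 1 1 ⊗ₜ[ℂ] εKij 0 0)

/-- Value of the comultiplication on β. -/
def Dβ : KP ⊗[ℂ] KP :=
  εK ⊗ₜ[ℂ] βK + βK ⊗ₜ[ℂ] εK + αK ⊗ₜ[ℂ] γK + γK ⊗ₜ[ℂ] αK +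
    (2⁻¹ : ℂ) • (εKij 0 0 ⊗ₜ[ℂ] εKij 1 1 - I • (εKij 0 1 ⊗ₜ[ℂ] εKij 1 0) +
      I • (εKij 1 0 ⊗ₜ[ℂ] εKij 0 1) + εKij 1 1 ⊗ₜ[ℂ] εKij 0 0)

/-- Value of the comultiplication on γ. -/
def Dγ : KP ⊗[ℂ] KP :=
  εK ⊗ₜ[ℂ] γK + γK ⊗ₜ[ℂ] εK + αK ⊗ₜ[ℂ] βK + βK ⊗ₜ[ℂ] αK +
    (2⁻¹ : ℂ) • (εKij 0 0 ⊗ₜ[ℂ] εKij 0 0 - εKij 0 1 ⊗ₜ[ℂ] εKij 0 1 -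
      εKij 1 0 ⊗ₜ[ℂ] εKij 1 0 + εKij 1 1 ⊗ₜ[ℂ] εKij 1 1)

/-- The comultiplication on the matrix summand. -/
def ΔM : M2 →ₗ[ℂ] KP ⊗[ℂ] KP :=
  (TensorProduct.mk ℂ KP KP εK) ∘ₗ mLin
  + (TensorProduct.mk ℂ KP KP αK) ∘ₗ mLin ∘ₗ conjBy uA
  + (TensorProduct.mk ℂ KP KP βK) ∘ₗ mLin ∘ₗ conjBy uB
  + (TensorProduct.mk ℂ KP KP γK) ∘ₗ mLin ∘ₗ conjBy uC
  + ((TensorProduct.mk ℂ KP KP).flip εK) ∘ₗ mLin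
  + ((TensorProduct.mk ℂ KP KP).flip αK) ∘ₗ mLin ∘ₗ conjBy (cconj uA)
  + ((TensorProduct.mk ℂ KP KP).flip βK) ∘ₗ mLin ∘ₗ conjBy (cconj uB)
  + ((TensorProduct.mk ℂ KP KP).flip γK) ∘ₗ mLin ∘ₗ conjBy (cconj uC)

/-- The Kac–Paljutkin comultiplication `Δ_KP : K → K ⊗ K`. -/
def ΔKP : KP →ₗ[ℂ] KP ⊗[ℂ] KP :=
  pε.smulRight Dε + pα.smulRight Dα + pβ.smulRight Dβ + pγ.smulRight Dγ + ΔM ∘ₗ pM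


def wA : M2 := !![-1, 0; 0, 1]
def wB : M2 := !![0, 1; I, 0]
def wC : M2 := !![0, -I; -1, 0]

/-- The graded-twist comultiplication on the matrix summand. -/
def ΔgrM : M2 →ₗ[ℂ] KP ⊗[ℂ] KP :=
  (TensorProduct.mk ℂ KP KP εK) ∘ₗ mLin
  + (TensorProduct.mk ℂ KP KP αK) ∘ₗ mLin ∘ₗ conjBy wA
  + (TensorProduct.mk ℂ KP KP βK) ∘ₗ mLin ∘ₗ conjBy wB
  + (TensorProduct.mk ℂ KP KP γK) ∘ₗ mLin ∘ₗ conjBy wC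
  + ((TensorProduct.mk ℂ KP KP).flip εK) ∘ₗ mLin
  + ((TensorProduct.mk ℂ KP KP).flip αK) ∘ₗ mLin ∘ₗ conjBy (cconj wA)
  + ((TensorProduct.mk ℂ KP KP).flip βK) ∘ₗ mLin ∘ₗ conjBy (cconj wB)
  + ((TensorProduct.mk ℂ KP KP).flip γK) ∘ₗ mLin ∘ₗ conjBy (cconj wC)

/-- Value of the graded-twist comultiplication on ε. -/
def Dgrε : KP ⊗[ℂ] KP :=
  εK ⊗ₜ[ℂ] εK + αK ⊗ₜ[ℂ] αK + βK ⊗ₜ[ℂ] βK + γK ⊗ₜ[ℂ] γK +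
    (2⁻¹ : ℂ) • (εKij 0 0 ⊗ₜ[ℂ] εKij 0 0 - εKij 0 1 ⊗ₜ[ℂ] εKij 0 1 -
      εKij 1 0 ⊗ₜ[ℂ] εKij 1 0 + εKij 1 1 ⊗ₜ[ℂ] εKij 1 1)

/-- Value of the graded-twist comultiplication on α'. -/
def Dgrα : KP ⊗[ℂ] KP :=
  εK ⊗ₜ[ℂ] αK + αK ⊗ₜ[ℂ] εK + βK ⊗ₜ[ℂ] γK + γK ⊗ₜ[ℂ] βK +
    (2⁻¹ : ℂ) • (εKij 0 0 ⊗ₜ[ℂ] εKij 0 0 + εKij 0 1 ⊗ₜ[ℂ] εKij 0 1 +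
      εKij 1 0 ⊗ₜ[ℂ] εKij 1 0 + εKij 1 1 ⊗ₜ[ℂ] εKij 1 1)

/-- Value of the graded-twist comultiplication on β'. -/
def Dgrβ : KP ⊗[ℂ] KP :=
  εK ⊗ₜ[ℂ] βK + βK ⊗ₜ[ℂ] εK + αK ⊗ₜ[ℂ] γK + γK ⊗ₜ[ℂ] αK +
    (2⁻¹ : ℂ) • (εKij 0 0 ⊗ₜ[ℂ] εKij 1 1 + I • (εKij 0 1 ⊗ₜ[ℂ] εKij 1 0) -
      I • (εKij 1 0 ⊗ₜ[ℂ] εKij 0 1) + εKij 1 1 ⊗ₜ[ℂ] εKij 0 0)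

/-- Value of the graded-twist comultiplication on γ'. -/
def Dgrγ : KP ⊗[ℂ] KP :=
  εK ⊗ₜ[ℂ] γK + γK ⊗ₜ[ℂ] εK + αK ⊗ₜ[ℂ] βK + βK ⊗ₜ[ℂ] αK +
    (2⁻¹ : ℂ) • (εKij 0 0 ⊗ₜ[ℂ] εKij 1 1 - I • (εKij 0 1 ⊗ₜ[ℂ] εKij 1 0) +
      I • (εKij 1 0 ⊗ₜ[ℂ] εKij 0 1) + εKij 1 1 ⊗ₜ[ℂ] εKij 0 0)

/-- The graded-twist comultiplication `Δ_gr : K → K ⊗ K`. -/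
def Δgr : KP →ₗ[ℂ] KP ⊗[ℂ] KP :=
  pε.smulRight Dgrε + pα.smulRight Dgrα + pβ.smulRight Dgrβ + pγ.smulRight Dgrγ + ΔgrM ∘ₗ pM

def vM : M2 := !![-1, 0; 0, I]

/-- The map `Φ : K → K` sending `(ε, α', β', γ')` to `(ε, γ, α, β)` and `x ∈ M₂(ℂ)` to
`v x v*` with `v = diag(−1, i)`. -/
def ΦK : KP →ₗ[ℂ] KP :=
  pε.prod (pβ.prod (pγ.prod (pα.prod ((conjBy vM) ∘ₗ pM))))

lemma vM_mul_conjT : vM * vMᴴ = 1 := by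
  ext a b; fin_cases a <;> fin_cases b <;>
    simp [vM, Matrix.mul_apply, Fin.sum_univ_two, Matrix.one_apply]

lemma conjT_mul_vM : vMᴴ * vM = 1 := by
  ext a b; fin_cases a <;> fin_cases b <;>
    simp [vM, Matrix.mul_apply, Fin.sum_univ_two, Matrix.one_apply]

def ΨK : KP →ₗ[ℂ] KP :=
  pε.prod (pγ.prod (pα.prod (pβ.prod ((conjBy vMᴴ) ∘ₗ pM))))

lemma ΦK_apply (z : KP) :
    ΦK z = (z.1, z.2.2.1, z.2.2.2.1, z.2.1, vM * (z.2.2.2.2 * vMᴴ)) := by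
  rfl

lemma ΨK_apply (z : KP) :
    ΨK z = (z.1, z.2.2.2.1, z.2.1, z.2.2.1, vMᴴ * (z.2.2.2.2 * vM)) := by
  simp [ΨK, conjBy, pε, pα, pβ, pγ, pM, LinearMap.prod]

lemma ΦK_bijective : Function.Bijective ΦK := by
  refine Function.bijective_iff_has_inverse.2 ⟨ΨK, fun z => ?_, fun z => ?_⟩ <;>
    simp only [ΦK_apply, ΨK_apply, Prod.ext_iff, ← Matrix.mul_assoc, conjT_mul_vM,
      vM_mul_conjT, Matrix.one_mul] <;>
    simp [Matrix.mul_assoc, conjT_mul_vM, vM_mul_conjT]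

lemma ΦK_one : ΦK 1 = 1 := by
  have : (1 : KP) = (1,1,1,1,1) := rfl
  rw [this, ΦK_apply]
  simp [Prod.ext_iff, Matrix.mul_assoc, conjT_mul_vM, vM_mul_conjT]

lemma ΦK_mul (x y : KP) : ΦK (x * y) = ΦK x * ΦK y := by
  rcases x with ⟨a,b,c,d,m⟩; rcases y with ⟨a',b',c',d',m'⟩
  simp only [ΦK_apply, Prod.mk_mul_mk, Prod.mk.injEq]
  refine ⟨trivial, trivial, trivial, trivial, ?_⟩
  simp only [← Matrix.mul_assoc]
  rw [Matrix.mul_assoc (vM * m) vMᴴ vM, conjT_mul_vM]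
  simp [Matrix.mul_assoc]

lemma ΦK_star (x : KP) : ΦK (star x) = star (ΦK x) := by
  rcases x with ⟨a,b,c,d,m⟩
  simp only [Prod.star_def, ΦK_apply, Matrix.star_eq_conjTranspose, Prod.mk.injEq]
  refine ⟨trivial, trivial, trivial, trivial, ?_⟩
  simp [Matrix.conjTranspose_mul, Matrix.mul_assoc]

lemma conj_uA_00 : conjBy (uA) (eM 0 0) = eM 1 1 := by
  ext r s; fin_cases r <;> fin_cases s <;>
    simp [conjBy, uA, cconj, eM, Matrix.mul_apply, Fin.sum_univ_two, Matrix.single]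

lemma conj_uA_01 : conjBy (uA) (eM 0 1) = (-I : ℂ) • eM 1 0 := by
  ext r s; fin_cases r <;> fin_cases s <;>
    simp [conjBy, uA, cconj, eM, Matrix.mul_apply, Fin.sum_univ_two, Matrix.single]

lemma conj_uA_10 : conjBy (uA) (eM 1 0) = (I : ℂ) • eM 0 1 := by
  ext r s; fin_cases r <;> fin_cases s <;>
    simp [conjBy, uA, cconj, eM, Matrix.mul_apply, Fin.sum_univ_two, Matrix.single]

lemma conj_uA_11 : conjBy (uA) (eM 1 1) = eM 0 0 := by
  ext r s; fin_cases r <;> fin_cases s <;>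
    simp [conjBy, uA, cconj, eM, Matrix.mul_apply, Fin.sum_univ_two, Matrix.single]

lemma conj_uB_00 : conjBy (uB) (eM 0 0) = eM 1 1 := by
  ext r s; fin_cases r <;> fin_cases s <;>
    simp [conjBy, uB, cconj, eM, Matrix.mul_apply, Fin.sum_univ_two, Matrix.single]

lemma conj_uB_01 : conjBy (uB) (eM 0 1) = (I : ℂ) • eM 1 0 := by
  ext r s; fin_cases r <;> fin_cases s <;>
    simp [conjBy, uB, cconj, eM, Matrix.mul_apply, Fin.sum_univ_two, Matrix.single]

lemma conj_uB_10 : conjBy (uB) (eM 1 0) = (-I : ℂ) • eM 0 1 := by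
  ext r s; fin_cases r <;> fin_cases s <;>
    simp [conjBy, uB, cconj, eM, Matrix.mul_apply, Fin.sum_univ_two, Matrix.single]

lemma conj_uB_11 : conjBy (uB) (eM 1 1) = eM 0 0 := by
  ext r s; fin_cases r <;> fin_cases s <;>
    simp [conjBy, uB, cconj, eM, Matrix.mul_apply, Fin.sum_univ_two, Matrix.single]

lemma conj_uC_00 : conjBy (uC) (eM 0 0) = eM 0 0 := by
  ext r s; fin_cases r <;> fin_cases s <;>
    simp [conjBy, uC, cconj, eM, Matrix.mul_apply, Fin.sum_univ_two, Matrix.single]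

lemma conj_uC_01 : conjBy (uC) (eM 0 1) = (-1 : ℂ) • eM 0 1 := by
  ext r s; fin_cases r <;> fin_cases s <;>
    simp [conjBy, uC, cconj, eM, Matrix.mul_apply, Fin.sum_univ_two, Matrix.single]

lemma conj_uC_10 : conjBy (uC) (eM 1 0) = (-1 : ℂ) • eM 1 0 := by
  ext r s; fin_cases r <;> fin_cases s <;>
    simp [conjBy, uC, cconj, eM, Matrix.mul_apply, Fin.sum_univ_two, Matrix.single]

lemma conj_uC_11 : conjBy (uC) (eM 1 1) = eM 1 1 := by
  ext r s; fin_cases r <;> fin_cases s <;>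
    simp [conjBy, uC, cconj, eM, Matrix.mul_apply, Fin.sum_univ_two, Matrix.single]

lemma conj_wA_00 : conjBy (wA) (eM 0 0) = eM 0 0 := by
  ext r s; fin_cases r <;> fin_cases s <;>
    simp [conjBy, wA, cconj, eM, Matrix.mul_apply, Fin.sum_univ_two, Matrix.single]

lemma conj_wA_01 : conjBy (wA) (eM 0 1) = (-1 : ℂ) • eM 0 1 := by
  ext r s; fin_cases r <;> fin_cases s <;>
    simp [conjBy, wA, cconj, eM, Matrix.mul_apply, Fin.sum_univ_two, Matrix.single]

lemma conj_wA_10 : conjBy (wA) (eM 1 0) = (-1 : ℂ) • eM 1 0 := by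
  ext r s; fin_cases r <;> fin_cases s <;>
    simp [conjBy, wA, cconj, eM, Matrix.mul_apply, Fin.sum_univ_two, Matrix.single]

lemma conj_wA_11 : conjBy (wA) (eM 1 1) = eM 1 1 := by
  ext r s; fin_cases r <;> fin_cases s <;>
    simp [conjBy, wA, cconj, eM, Matrix.mul_apply, Fin.sum_univ_two, Matrix.single]

lemma conj_wB_00 : conjBy (wB) (eM 0 0) = eM 1 1 := by
  ext r s; fin_cases r <;> fin_cases s <;>
    simp [conjBy, wB, cconj, eM, Matrix.mul_apply, Fin.sum_univ_two, Matrix.single]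

lemma conj_wB_01 : conjBy (wB) (eM 0 1) = (I : ℂ) • eM 1 0 := by
  ext r s; fin_cases r <;> fin_cases s <;>
    simp [conjBy, wB, cconj, eM, Matrix.mul_apply, Fin.sum_univ_two, Matrix.single]

lemma conj_wB_10 : conjBy (wB) (eM 1 0) = (-I : ℂ) • eM 0 1 := by
  ext r s; fin_cases r <;> fin_cases s <;>
    simp [conjBy, wB, cconj, eM, Matrix.mul_apply, Fin.sum_univ_two, Matrix.single]

lemma conj_wB_11 : conjBy (wB) (eM 1 1) = eM 0 0 := by
  ext r s; fin_cases r <;> fin_cases s <;>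
    simp [conjBy, wB, cconj, eM, Matrix.mul_apply, Fin.sum_univ_two, Matrix.single]

lemma conj_wC_00 : conjBy (wC) (eM 0 0) = eM 1 1 := by
  ext r s; fin_cases r <;> fin_cases s <;>
    simp [conjBy, wC, cconj, eM, Matrix.mul_apply, Fin.sum_univ_two, Matrix.single]

lemma conj_wC_01 : conjBy (wC) (eM 0 1) = (-I : ℂ) • eM 1 0 := by
  ext r s; fin_cases r <;> fin_cases s <;>
    simp [conjBy, wC, cconj, eM, Matrix.mul_apply, Fin.sum_univ_two, Matrix.single]

lemma conj_wC_10 : conjBy (wC) (eM 1 0) = (I : ℂ) • eM 0 1 := by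
  ext r s; fin_cases r <;> fin_cases s <;>
    simp [conjBy, wC, cconj, eM, Matrix.mul_apply, Fin.sum_univ_two, Matrix.single]

lemma conj_wC_11 : conjBy (wC) (eM 1 1) = eM 0 0 := by
  ext r s; fin_cases r <;> fin_cases s <;>
    simp [conjBy, wC, cconj, eM, Matrix.mul_apply, Fin.sum_univ_two, Matrix.single]

lemma conj_vM_00 : conjBy (vM) (eM 0 0) = eM 0 0 := by
  ext r s; fin_cases r <;> fin_cases s <;>
    simp [conjBy, vM, cconj, eM, Matrix.mul_apply, Fin.sum_univ_two, Matrix.single]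

lemma conj_vM_01 : conjBy (vM) (eM 0 1) = (I : ℂ) • eM 0 1 := by
  ext r s; fin_cases r <;> fin_cases s <;>
    simp [conjBy, vM, cconj, eM, Matrix.mul_apply, Fin.sum_univ_two, Matrix.single]

lemma conj_vM_10 : conjBy (vM) (eM 1 0) = (-I : ℂ) • eM 1 0 := by
  ext r s; fin_cases r <;> fin_cases s <;>
    simp [conjBy, vM, cconj, eM, Matrix.mul_apply, Fin.sum_univ_two, Matrix.single]

lemma conj_vM_11 : conjBy (vM) (eM 1 1) = eM 1 1 := by
  ext r s; fin_cases r <;> fin_cases s <;>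
    simp [conjBy, vM, cconj, eM, Matrix.mul_apply, Fin.sum_univ_two, Matrix.single]

lemma conj_cuA_00 : conjBy (cconj uA) (eM 0 0) = eM 1 1 := by
  ext r s; fin_cases r <;> fin_cases s <;>
    simp [conjBy, uA, cconj, eM, Matrix.mul_apply, Fin.sum_univ_two, Matrix.single]

lemma conj_cuA_01 : conjBy (cconj uA) (eM 0 1) = (I : ℂ) • eM 1 0 := by
  ext r s; fin_cases r <;> fin_cases s <;>
    simp [conjBy, uA, cconj, eM, Matrix.mul_apply, Fin.sum_univ_two, Matrix.single]

lemma conj_cuA_10 : conjBy (cconj uA) (eM 1 0) = (-I : ℂ) • eM 0 1 := by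
  ext r s; fin_cases r <;> fin_cases s <;>
    simp [conjBy, uA, cconj, eM, Matrix.mul_apply, Fin.sum_univ_two, Matrix.single]

lemma conj_cuA_11 : conjBy (cconj uA) (eM 1 1) = eM 0 0 := by
  ext r s; fin_cases r <;> fin_cases s <;>
    simp [conjBy, uA, cconj, eM, Matrix.mul_apply, Fin.sum_univ_two, Matrix.single]

lemma conj_cuB_00 : conjBy (cconj uB) (eM 0 0) = eM 1 1 := by
  ext r s; fin_cases r <;> fin_cases s <;>
    simp [conjBy, uB, cconj, eM, Matrix.mul_apply, Fin.sum_univ_two, Matrix.single]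

lemma conj_cuB_01 : conjBy (cconj uB) (eM 0 1) = (-I : ℂ) • eM 1 0 := by
  ext r s; fin_cases r <;> fin_cases s <;>
    simp [conjBy, uB, cconj, eM, Matrix.mul_apply, Fin.sum_univ_two, Matrix.single]

lemma conj_cuB_10 : conjBy (cconj uB) (eM 1 0) = (I : ℂ) • eM 0 1 := by
  ext r s; fin_cases r <;> fin_cases s <;>
    simp [conjBy, uB, cconj, eM, Matrix.mul_apply, Fin.sum_univ_two, Matrix.single]

lemma conj_cuB_11 : conjBy (cconj uB) (eM 1 1) = eM 0 0 := by
  ext r s; fin_cases r <;> fin_cases s <;>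
    simp [conjBy, uB, cconj, eM, Matrix.mul_apply, Fin.sum_univ_two, Matrix.single]

lemma conj_cuC_00 : conjBy (cconj uC) (eM 0 0) = eM 0 0 := by
  ext r s; fin_cases r <;> fin_cases s <;>
    simp [conjBy, uC, cconj, eM, Matrix.mul_apply, Fin.sum_univ_two, Matrix.single]

lemma conj_cuC_01 : conjBy (cconj uC) (eM 0 1) = (-1 : ℂ) • eM 0 1 := by
  ext r s; fin_cases r <;> fin_cases s <;>
    simp [conjBy, uC, cconj, eM, Matrix.mul_apply, Fin.sum_univ_two, Matrix.single]

lemma conj_cuC_10 : conjBy (cconj uC) (eM 1 0) = (-1 : ℂ) • eM 1 0 := by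
  ext r s; fin_cases r <;> fin_cases s <;>
    simp [conjBy, uC, cconj, eM, Matrix.mul_apply, Fin.sum_univ_two, Matrix.single]

lemma conj_cuC_11 : conjBy (cconj uC) (eM 1 1) = eM 1 1 := by
  ext r s; fin_cases r <;> fin_cases s <;>
    simp [conjBy, uC, cconj, eM, Matrix.mul_apply, Fin.sum_univ_two, Matrix.single]

lemma conj_cwA_00 : conjBy (cconj wA) (eM 0 0) = eM 0 0 := by
  ext r s; fin_cases r <;> fin_cases s <;>
    simp [conjBy, wA, cconj, eM, Matrix.mul_apply, Fin.sum_univ_two, Matrix.single]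

lemma conj_cwA_01 : conjBy (cconj wA) (eM 0 1) = (-1 : ℂ) • eM 0 1 := by
  ext r s; fin_cases r <;> fin_cases s <;>
    simp [conjBy, wA, cconj, eM, Matrix.mul_apply, Fin.sum_univ_two, Matrix.single]

lemma conj_cwA_10 : conjBy (cconj wA) (eM 1 0) = (-1 : ℂ) • eM 1 0 := by
  ext r s; fin_cases r <;> fin_cases s <;>
    simp [conjBy, wA, cconj, eM, Matrix.mul_apply, Fin.sum_univ_two, Matrix.single]

lemma conj_cwA_11 : conjBy (cconj wA) (eM 1 1) = eM 1 1 := by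
  ext r s; fin_cases r <;> fin_cases s <;>
    simp [conjBy, wA, cconj, eM, Matrix.mul_apply, Fin.sum_univ_two, Matrix.single]

lemma conj_cwB_00 : conjBy (cconj wB) (eM 0 0) = eM 1 1 := by
  ext r s; fin_cases r <;> fin_cases s <;>
    simp [conjBy, wB, cconj, eM, Matrix.mul_apply, Fin.sum_univ_two, Matrix.single]

lemma conj_cwB_01 : conjBy (cconj wB) (eM 0 1) = (-I : ℂ) • eM 1 0 := by
  ext r s; fin_cases r <;> fin_cases s <;>
    simp [conjBy, wB, cconj, eM, Matrix.mul_apply, Fin.sum_univ_two, Matrix.single]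

lemma conj_cwB_10 : conjBy (cconj wB) (eM 1 0) = (I : ℂ) • eM 0 1 := by
  ext r s; fin_cases r <;> fin_cases s <;>
    simp [conjBy, wB, cconj, eM, Matrix.mul_apply, Fin.sum_univ_two, Matrix.single]

lemma conj_cwB_11 : conjBy (cconj wB) (eM 1 1) = eM 0 0 := by
  ext r s; fin_cases r <;> fin_cases s <;>
    simp [conjBy, wB, cconj, eM, Matrix.mul_apply, Fin.sum_univ_two, Matrix.single]

lemma conj_cwC_00 : conjBy (cconj wC) (eM 0 0) = eM 1 1 := by
  ext r s; fin_cases r <;> fin_cases s <;>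
    simp [conjBy, wC, cconj, eM, Matrix.mul_apply, Fin.sum_univ_two, Matrix.single]

lemma conj_cwC_01 : conjBy (cconj wC) (eM 0 1) = (I : ℂ) • eM 1 0 := by
  ext r s; fin_cases r <;> fin_cases s <;>
    simp [conjBy, wC, cconj, eM, Matrix.mul_apply, Fin.sum_univ_two, Matrix.single]

lemma conj_cwC_10 : conjBy (cconj wC) (eM 1 0) = (-I : ℂ) • eM 0 1 := by
  ext r s; fin_cases r <;> fin_cases s <;>
    simp [conjBy, wC, cconj, eM, Matrix.mul_apply, Fin.sum_univ_two, Matrix.single]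

lemma conj_cwC_11 : conjBy (cconj wC) (eM 1 1) = eM 0 0 := by
  ext r s; fin_cases r <;> fin_cases s <;>
    simp [conjBy, wC, cconj, eM, Matrix.mul_apply, Fin.sum_univ_two, Matrix.single]


lemma mLin_eM (i j : Fin 2) : mLin (eM i j) = εKij i j := rfl

lemma ΦK_mLin (x : M2) : ΦK (mLin x) = mLin (conjBy vM x) := by
  simp [ΦK_apply, mLin, conjBy, Prod.ext_iff]

lemma ΦK_eps : ΦK εK = εK := by
  simp [ΦK_apply, εK, Prod.ext_iff]
lemma ΦK_alpha : ΦK αK = γK := by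
  simp [ΦK_apply, αK, γK, Prod.ext_iff]
lemma ΦK_beta : ΦK βK = αK := by
  simp [ΦK_apply, βK, αK, Prod.ext_iff]
lemma ΦK_gamma : ΦK γK = βK := by
  simp [ΦK_apply, γK, βK, Prod.ext_iff]

lemma ΦK_e00 : ΦK (εKij 0 0) = εKij 0 0 := by
  rw [← mLin_eM, ΦK_mLin, conj_vM_00, mLin_eM]
lemma ΦK_e01 : ΦK (εKij 0 1) = (I : ℂ) • εKij 0 1 := by
  rw [← mLin_eM, ΦK_mLin, conj_vM_01, _root_.map_smul, mLin_eM]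
lemma ΦK_e10 : ΦK (εKij 1 0) = (-I : ℂ) • εKij 1 0 := by
  rw [← mLin_eM, ΦK_mLin, conj_vM_10, _root_.map_smul, mLin_eM]
lemma ΦK_e11 : ΦK (εKij 1 1) = εKij 1 1 := by
  rw [← mLin_eM, ΦK_mLin, conj_vM_11, mLin_eM]

lemma pM_eps : pM εK = 0 := rfl
lemma pM_ij (i j : Fin 2) : pM (εKij i j) = eM i j := rfl

lemma proj_vals :
    pε εK = 1 ∧ pα εK = 0 ∧ pβ εK = 0 ∧ pγ εK = 0 ∧
    pε αK = 0 ∧ pα αK = 1 ∧ pβ αK = 0 ∧ pγ αK = 0 ∧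
    pε βK = 0 ∧ pα βK = 0 ∧ pβ βK = 1 ∧ pγ βK = 0 ∧
    pε γK = 0 ∧ pα γK = 0 ∧ pβ γK = 0 ∧ pγ γK = 1 := by
  refine ⟨rfl, rfl, rfl, rfl, rfl, rfl, rfl, rfl, rfl, rfl, rfl, rfl, rfl, rfl, rfl, rfl⟩

lemma Δgr_eps : Δgr εK = Dgrε := by
  simp [Δgr, pε, pα, pβ, pγ, pM, εK, ΔgrM, mLin, conjBy,
    Matrix.mul_zero, Matrix.zero_mul, Prod.mk_zero_zero]
lemma Δgr_alpha : Δgr αK = Dgrα := by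
  simp [Δgr, pε, pα, pβ, pγ, pM, αK, ΔgrM, mLin, conjBy,
    Matrix.mul_zero, Matrix.zero_mul, Prod.mk_zero_zero]
lemma Δgr_beta : Δgr βK = Dgrβ := by
  simp [Δgr, pε, pα, pβ, pγ, pM, βK, ΔgrM, mLin, conjBy,
    Matrix.mul_zero, Matrix.zero_mul, Prod.mk_zero_zero]
lemma Δgr_gamma : Δgr γK = Dgrγ := by
  simp [Δgr, pε, pα, pβ, pγ, pM, γK, ΔgrM, mLin, conjBy,
    Matrix.mul_zero, Matrix.zero_mul, Prod.mk_zero_zero]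
lemma Δgr_ij (i j : Fin 2) : Δgr (εKij i j) = ΔgrM (eM i j) := by
  simp [Δgr, pε, pα, pβ, pγ, pM, εKij]

lemma ΔKP_eps : ΔKP εK = Dε := by
  simp [ΔKP, pε, pα, pβ, pγ, pM, εK, ΔM, mLin, conjBy,
    Matrix.mul_zero, Matrix.zero_mul, Prod.mk_zero_zero]
lemma ΔKP_alpha : ΔKP αK = Dα := by
  simp [ΔKP, pε, pα, pβ, pγ, pM, αK, ΔM, mLin, conjBy,
    Matrix.mul_zero, Matrix.zero_mul, Prod.mk_zero_zero]
lemma ΔKP_beta : ΔKP βK = Dβ := by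
  simp [ΔKP, pε, pα, pβ, pγ, pM, βK, ΔM, mLin, conjBy,
    Matrix.mul_zero, Matrix.zero_mul, Prod.mk_zero_zero]
lemma ΔKP_gamma : ΔKP γK = Dγ := by
  simp [ΔKP, pε, pα, pβ, pγ, pM, γK, ΔM, mLin, conjBy,
    Matrix.mul_zero, Matrix.zero_mul, Prod.mk_zero_zero]
lemma ΔKP_ij (i j : Fin 2) : ΔKP (εKij i j) = ΔM (eM i j) := by
  simp [ΔKP, pε, pα, pβ, pγ, pM, εKij]

lemma DgrM_00 : ΔgrM (eM 0 0) =
      εK ⊗ₜ[ℂ] εKij 0 0 +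
      αK ⊗ₜ[ℂ] εKij 0 0 +
      βK ⊗ₜ[ℂ] εKij 1 1 +
      γK ⊗ₜ[ℂ] εKij 1 1 +
      εKij 0 0 ⊗ₜ[ℂ] εK +
      εKij 0 0 ⊗ₜ[ℂ] αK +
      εKij 1 1 ⊗ₜ[ℂ] βK +
      εKij 1 1 ⊗ₜ[ℂ] γK := by
  simp only [ΔgrM, LinearMap.add_apply, LinearMap.comp_apply, TensorProduct.mk_apply,
    LinearMap.flip_apply, conj_cwA_00, conj_cwB_00, conj_cwC_00, conj_wA_00, conj_wB_00, conj_wC_00, _root_.map_smul, mLin_eM,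
    TensorProduct.smul_tmul', TensorProduct.tmul_smul]

lemma DgrM_01 : ΔgrM (eM 0 1) =
      εK ⊗ₜ[ℂ] εKij 0 1 +
      αK ⊗ₜ[ℂ] ((-1:ℂ) • εKij 0 1) +
      βK ⊗ₜ[ℂ] ((I:ℂ) • εKij 1 0) +
      γK ⊗ₜ[ℂ] ((-I:ℂ) • εKij 1 0) +
      εKij 0 1 ⊗ₜ[ℂ] εK +
      ((-1:ℂ) • εKij 0 1) ⊗ₜ[ℂ] αK +
      ((-I:ℂ) • εKij 1 0) ⊗ₜ[ℂ] βK +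
      ((I:ℂ) • εKij 1 0) ⊗ₜ[ℂ] γK := by
  simp only [ΔgrM, LinearMap.add_apply, LinearMap.comp_apply, TensorProduct.mk_apply,
    LinearMap.flip_apply, conj_cwA_01, conj_cwB_01, conj_cwC_01, conj_wA_01, conj_wB_01, conj_wC_01, _root_.map_smul, mLin_eM,
    TensorProduct.smul_tmul', TensorProduct.tmul_smul]

lemma DgrM_10 : ΔgrM (eM 1 0) =
      εK ⊗ₜ[ℂ] εKij 1 0 +
      αK ⊗ₜ[ℂ] ((-1:ℂ) • εKij 1 0) +
      βK ⊗ₜ[ℂ] ((-I:ℂ) • εKij 0 1) +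
      γK ⊗ₜ[ℂ] ((I:ℂ) • εKij 0 1) +
      εKij 1 0 ⊗ₜ[ℂ] εK +
      ((-1:ℂ) • εKij 1 0) ⊗ₜ[ℂ] αK +
      ((I:ℂ) • εKij 0 1) ⊗ₜ[ℂ] βK +
      ((-I:ℂ) • εKij 0 1) ⊗ₜ[ℂ] γK := by
  simp only [ΔgrM, LinearMap.add_apply, LinearMap.comp_apply, TensorProduct.mk_apply,
    LinearMap.flip_apply, conj_cwA_10, conj_cwB_10, conj_cwC_10, conj_wA_10, conj_wB_10, conj_wC_10, _root_.map_smul, mLin_eM,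
    TensorProduct.smul_tmul', TensorProduct.tmul_smul]

lemma DgrM_11 : ΔgrM (eM 1 1) =
      εK ⊗ₜ[ℂ] εKij 1 1 +
      αK ⊗ₜ[ℂ] εKij 1 1 +
      βK ⊗ₜ[ℂ] εKij 0 0 +
      γK ⊗ₜ[ℂ] εKij 0 0 +
      εKij 1 1 ⊗ₜ[ℂ] εK +
      εKij 1 1 ⊗ₜ[ℂ] αK +
      εKij 0 0 ⊗ₜ[ℂ] βK +
      εKij 0 0 ⊗ₜ[ℂ] γK := by
  simp only [ΔgrM, LinearMap.add_apply, LinearMap.comp_apply, TensorProduct.mk_apply,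
    LinearMap.flip_apply, conj_cwA_11, conj_cwB_11, conj_cwC_11, conj_wA_11, conj_wB_11, conj_wC_11, _root_.map_smul, mLin_eM,
    TensorProduct.smul_tmul', TensorProduct.tmul_smul]

lemma DM_00 : ΔM (eM 0 0) =
      εK ⊗ₜ[ℂ] εKij 0 0 +
      αK ⊗ₜ[ℂ] εKij 1 1 +
      βK ⊗ₜ[ℂ] εKij 1 1 +
      γK ⊗ₜ[ℂ] εKij 0 0 +
      εKij 0 0 ⊗ₜ[ℂ] εK +
      εKij 1 1 ⊗ₜ[ℂ] αK +
      εKij 1 1 ⊗ₜ[ℂ] βK +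
      εKij 0 0 ⊗ₜ[ℂ] γK := by
  simp only [ΔM, LinearMap.add_apply, LinearMap.comp_apply, TensorProduct.mk_apply,
    LinearMap.flip_apply, conj_cuA_00, conj_cuB_00, conj_cuC_00, conj_uA_00, conj_uB_00, conj_uC_00, _root_.map_smul, mLin_eM,
    TensorProduct.smul_tmul', TensorProduct.tmul_smul]

lemma DM_01 : ΔM (eM 0 1) =
      εK ⊗ₜ[ℂ] εKij 0 1 +
      αK ⊗ₜ[ℂ] ((-I:ℂ) • εKij 1 0) +
      βK ⊗ₜ[ℂ] ((I:ℂ) • εKij 1 0) +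
      γK ⊗ₜ[ℂ] ((-1:ℂ) • εKij 0 1) +
      εKij 0 1 ⊗ₜ[ℂ] εK +
      ((I:ℂ) • εKij 1 0) ⊗ₜ[ℂ] αK +
      ((-I:ℂ) • εKij 1 0) ⊗ₜ[ℂ] βK +
      ((-1:ℂ) • εKij 0 1) ⊗ₜ[ℂ] γK := by
  simp only [ΔM, LinearMap.add_apply, LinearMap.comp_apply, TensorProduct.mk_apply,
    LinearMap.flip_apply, conj_cuA_01, conj_cuB_01, conj_cuC_01, conj_uA_01, conj_uB_01, conj_uC_01, _root_.map_smul, mLin_eM,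
    TensorProduct.smul_tmul', TensorProduct.tmul_smul]

lemma DM_10 : ΔM (eM 1 0) =
      εK ⊗ₜ[ℂ] εKij 1 0 +
      αK ⊗ₜ[ℂ] ((I:ℂ) • εKij 0 1) +
      βK ⊗ₜ[ℂ] ((-I:ℂ) • εKij 0 1) +
      γK ⊗ₜ[ℂ] ((-1:ℂ) • εKij 1 0) +
      εKij 1 0 ⊗ₜ[ℂ] εK +
      ((-I:ℂ) • εKij 0 1) ⊗ₜ[ℂ] αK +
      ((I:ℂ) • εKij 0 1) ⊗ₜ[ℂ] βK +
      ((-1:ℂ) • εKij 1 0) ⊗ₜ[ℂ] γK := by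
  simp only [ΔM, LinearMap.add_apply, LinearMap.comp_apply, TensorProduct.mk_apply,
    LinearMap.flip_apply, conj_cuA_10, conj_cuB_10, conj_cuC_10, conj_uA_10, conj_uB_10, conj_uC_10, _root_.map_smul, mLin_eM,
    TensorProduct.smul_tmul', TensorProduct.tmul_smul]

lemma DM_11 : ΔM (eM 1 1) =
      εK ⊗ₜ[ℂ] εKij 1 1 +
      αK ⊗ₜ[ℂ] εKij 0 0 +
      βK ⊗ₜ[ℂ] εKij 0 0 +
      γK ⊗ₜ[ℂ] εKij 1 1 +
      εKij 1 1 ⊗ₜ[ℂ] εK +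
      εKij 0 0 ⊗ₜ[ℂ] αK +
      εKij 0 0 ⊗ₜ[ℂ] βK +
      εKij 1 1 ⊗ₜ[ℂ] γK := by
  simp only [ΔM, LinearMap.add_apply, LinearMap.comp_apply, TensorProduct.mk_apply,
    LinearMap.flip_apply, conj_cuA_11, conj_cuB_11, conj_cuC_11, conj_uA_11, conj_uB_11, conj_uC_11, _root_.map_smul, mLin_eM,
    TensorProduct.smul_tmul', TensorProduct.tmul_smul]

lemma comm_eps : TensorProduct.map ΦK ΦK (Δgr εK) = ΔKP (ΦK εK) := by
  rw [Δgr_eps, ΦK_eps, ΔKP_eps]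
  simp only [Dgrε, Dε, map_add, map_sub, _root_.map_smul, TensorProduct.map_tmul, ΦK_eps, ΦK_alpha, ΦK_beta, ΦK_gamma, ΦK_e00, ΦK_e01, ΦK_e10, ΦK_e11, TensorProduct.smul_tmul, TensorProduct.tmul_smul, smul_smul, Complex.I_mul_I, neg_mul, mul_neg, neg_neg, one_smul, neg_smul, mul_one, one_mul, TensorProduct.neg_tmul, TensorProduct.tmul_neg]
  match_scalars <;> simp [Complex.I_sq] <;> ring_nf <;> simp [Complex.I_sq] <;> norm_num

lemma comm_alpha : TensorProduct.map ΦK ΦK (Δgr αK) = ΔKP (ΦK αK) := by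
  rw [Δgr_alpha, ΦK_alpha, ΔKP_gamma]
  simp only [Dgrα, Dγ, map_add, map_sub, _root_.map_smul, TensorProduct.map_tmul, ΦK_eps, ΦK_alpha, ΦK_beta, ΦK_gamma, ΦK_e00, ΦK_e01, ΦK_e10, ΦK_e11, TensorProduct.smul_tmul, TensorProduct.tmul_smul, smul_smul, Complex.I_mul_I, neg_mul, mul_neg, neg_neg, one_smul, neg_smul, mul_one, one_mul, TensorProduct.neg_tmul, TensorProduct.tmul_neg]
  match_scalars <;> simp [Complex.I_sq] <;> ring_nf <;> simp [Complex.I_sq] <;> norm_num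

lemma comm_beta : TensorProduct.map ΦK ΦK (Δgr βK) = ΔKP (ΦK βK) := by
  rw [Δgr_beta, ΦK_beta, ΔKP_alpha]
  simp only [Dgrβ, Dα, map_add, map_sub, _root_.map_smul, TensorProduct.map_tmul, ΦK_eps, ΦK_alpha, ΦK_beta, ΦK_gamma, ΦK_e00, ΦK_e01, ΦK_e10, ΦK_e11, TensorProduct.smul_tmul, TensorProduct.tmul_smul, smul_smul, Complex.I_mul_I, neg_mul, mul_neg, neg_neg, one_smul, neg_smul, mul_one, one_mul, TensorProduct.neg_tmul, TensorProduct.tmul_neg]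
  match_scalars <;> simp [Complex.I_sq] <;> ring_nf <;> simp [Complex.I_sq] <;> norm_num

lemma comm_gamma : TensorProduct.map ΦK ΦK (Δgr γK) = ΔKP (ΦK γK) := by
  rw [Δgr_gamma, ΦK_gamma, ΔKP_beta]
  simp only [Dgrγ, Dβ, map_add, map_sub, _root_.map_smul, TensorProduct.map_tmul, ΦK_eps, ΦK_alpha, ΦK_beta, ΦK_gamma, ΦK_e00, ΦK_e01, ΦK_e10, ΦK_e11, TensorProduct.smul_tmul, TensorProduct.tmul_smul, smul_smul, Complex.I_mul_I, neg_mul, mul_neg, neg_neg, one_smul, neg_smul, mul_one, one_mul, TensorProduct.neg_tmul, TensorProduct.tmul_neg]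
  match_scalars <;> simp [Complex.I_sq] <;> ring_nf <;> simp [Complex.I_sq] <;> norm_num

lemma comm_00 :
    TensorProduct.map ΦK ΦK (Δgr (εKij 0 0)) = ΔKP (ΦK (εKij 0 0)) := by
  rw [Δgr_ij, DgrM_00]
  rw [ΦK_e00, ΔKP_ij, DM_00]
  simp only [map_add, map_sub, map_neg, smul_add, smul_sub, smul_neg, _root_.map_smul, TensorProduct.map_tmul, ΦK_eps, ΦK_alpha, ΦK_beta, ΦK_gamma, ΦK_e00, ΦK_e01, ΦK_e10, ΦK_e11, TensorProduct.smul_tmul, TensorProduct.tmul_smul, smul_smul, Complex.I_mul_I, neg_mul, mul_neg, neg_neg, one_smul, neg_smul, mul_one, one_mul, TensorProduct.neg_tmul, TensorProduct.tmul_neg]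
  match_scalars <;> simp [Complex.I_sq] <;> ring_nf <;> simp [Complex.I_sq] <;> norm_num

lemma comm_01 :
    TensorProduct.map ΦK ΦK (Δgr (εKij 0 1)) = ΔKP (ΦK (εKij 0 1)) := by
  rw [Δgr_ij, DgrM_01]
  rw [ΦK_e01, _root_.map_smul, ΔKP_ij, DM_01]
  simp only [map_add, map_sub, map_neg, smul_add, smul_sub, smul_neg, _root_.map_smul, TensorProduct.map_tmul, ΦK_eps, ΦK_alpha, ΦK_beta, ΦK_gamma, ΦK_e00, ΦK_e01, ΦK_e10, ΦK_e11, TensorProduct.smul_tmul, TensorProduct.tmul_smul, smul_smul, Complex.I_mul_I, neg_mul, mul_neg, neg_neg, one_smul, neg_smul, mul_one, one_mul, TensorProduct.neg_tmul, TensorProduct.tmul_neg]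
  match_scalars <;> simp [Complex.I_sq] <;> ring_nf <;> simp [Complex.I_sq] <;> norm_num

lemma comm_10 :
    TensorProduct.map ΦK ΦK (Δgr (εKij 1 0)) = ΔKP (ΦK (εKij 1 0)) := by
  rw [Δgr_ij, DgrM_10]
  rw [ΦK_e10, _root_.map_smul, ΔKP_ij, DM_10]
  simp only [map_add, map_sub, map_neg, smul_add, smul_sub, smul_neg, _root_.map_smul, TensorProduct.map_tmul, ΦK_eps, ΦK_alpha, ΦK_beta, ΦK_gamma, ΦK_e00, ΦK_e01, ΦK_e10, ΦK_e11, TensorProduct.smul_tmul, TensorProduct.tmul_smul, smul_smul, Complex.I_mul_I, neg_mul, mul_neg, neg_neg, one_smul, neg_smul, mul_one, one_mul, TensorProduct.neg_tmul, TensorProduct.tmul_neg]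
  match_scalars <;> simp [Complex.I_sq] <;> ring_nf <;> simp [Complex.I_sq] <;> norm_num

lemma comm_11 :
    TensorProduct.map ΦK ΦK (Δgr (εKij 1 1)) = ΔKP (ΦK (εKij 1 1)) := by
  rw [Δgr_ij, DgrM_11]
  rw [ΦK_e11, ΔKP_ij, DM_11]
  simp only [map_add, map_sub, map_neg, smul_add, smul_sub, smul_neg, _root_.map_smul, TensorProduct.map_tmul, ΦK_eps, ΦK_alpha, ΦK_beta, ΦK_gamma, ΦK_e00, ΦK_e01, ΦK_e10, ΦK_e11, TensorProduct.smul_tmul, TensorProduct.tmul_smul, smul_smul, Complex.I_mul_I, neg_mul, mul_neg, neg_neg, one_smul, neg_smul, mul_one, one_mul, TensorProduct.neg_tmul, TensorProduct.tmul_neg]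
  match_scalars <;> simp [Complex.I_sq] <;> ring_nf <;> simp [Complex.I_sq] <;> norm_num


lemma KP_decomp (z : KP) :
    z = z.1 • εK + z.2.1 • αK + z.2.2.1 • βK + z.2.2.2.1 • γK +
      z.2.2.2.2 0 0 • εKij 0 0 + z.2.2.2.2 0 1 • εKij 0 1 +
      z.2.2.2.2 1 0 • εKij 1 0 + z.2.2.2.2 1 1 • εKij 1 1 := by
  rcases z with ⟨a,b,c,d,m⟩
  simp only [Prod.ext_iff, εK, αK, βK, γK, εKij, Prod.smul_mk, Prod.mk_add_mk,
    smul_zero, smul_eq_mul, mul_one, mul_zero, add_zero, zero_add, Prod.mk.injEq]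
  refine ⟨trivial, trivial, trivial, trivial, ?_⟩
  ext i j
  fin_cases i <;> fin_cases j <;>
    simp [eM, Matrix.single]

lemma comm_all : TensorProduct.map ΦK ΦK ∘ₗ Δgr = ΔKP ∘ₗ ΦK := by
  apply LinearMap.ext; intro z
  rw [LinearMap.comp_apply, LinearMap.comp_apply]
  conv_lhs => rw [KP_decomp z]
  conv_rhs => rw [KP_decomp z]
  simp only [map_add, _root_.map_smul, comm_eps, comm_alpha, comm_beta, comm_gamma,
    comm_00, comm_01, comm_10, comm_11]

/-- `Φ` is a unital `*`-algebra isomorphism of `K` intertwining the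
graded-twist comultiplication `Δ_gr` with the Kac–Paljutkin comultiplication `Δ_KP`;
i.e. `(Φ ⊗ Φ) ∘ Δ_gr = Δ_KP ∘ Φ`.  In particular `(K, Δ_gr) ≅ (K, Δ_KP)` as Hopf
`*`-algebras. -/
theorem graded_twist_iso_KacPaljutkin :
    -- Φ sends (ε, α', β', γ') to (ε, γ, α, β) and x to v x v*
    ΦK εK = εK ∧ ΦK αK = γK ∧ ΦK βK = αK ∧ ΦK γK = βK ∧
    (∀ x : M2, ΦK (mLin x) = mLin (vM * x * vMᴴ)) ∧
    -- Φ is a unital *-algebra isomorphism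
    Function.Bijective ΦK ∧
    ΦK 1 = 1 ∧
    (∀ x y : KP, ΦK (x * y) = ΦK x * ΦK y) ∧
    (∀ x : KP, ΦK (star x) = star (ΦK x)) ∧
    -- (Φ ⊗ Φ) ∘ Δ_gr = Δ_KP ∘ Φ
    TensorProduct.map ΦK ΦK ∘ₗ Δgr = ΔKP ∘ₗ ΦK := by
  refine ⟨ΦK_eps, ΦK_alpha, ΦK_beta, ΦK_gamma, fun x => ?_, ΦK_bijective, ΦK_one,
    ΦK_mul, ΦK_star, comm_all⟩
  rw [ΦK_mLin, conjBy]
  simp [Matrix.mul_assoc]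
end
end

section
/- The four elements u₁, u₂, u₃, u₄ of the Kac–Paljutkin algebra K are group-like for Δ_KP: Δ_KP(u_k) = u_k ⊗ u_k for each k = 1, 2, 3, 4, and each u_k is a self-adjoint unitary of K (u_k* = u_k and u_k² = 1). -/
open TensorProduct Matrix Complex
noncomputable section
set_option synthInstance.maxHeartbeats 1000000
set_option maxHeartbeats 1000000

/-- The 1-dimensional corepresentation u₁ = ε + α + β + γ + I₂. -/
def u1K : KP := (1, 1, 1, 1, 1)
/-- The 1-dimensional corepresentation u₂ = ε − α − β + γ + diag(1,−1). -/
def u2K : KP := (1, -1, -1, 1, !![1, 0; 0, -1])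
/-- The 1-dimensional corepresentation u₃ = ε + α + β + γ − I₂. -/
def u3K : KP := (1, 1, 1, 1, -1)
/-- The 1-dimensional corepresentation u₄ = ε − α − β + γ + diag(−1,1). -/
def u4K : KP := (1, -1, -1, 1, !![-1, 0; 0, 1])

/-- diag(1,-1) -/
def dK : M2 := !![1, 0; 0, -1]

lemma dK_neg : (!![-1, 0; 0, 1] : M2) = -dK := by
  ext i j; fin_cases i <;> fin_cases j <;> simp [dK]

lemma ΔM_apply (x : M2) : ΔM x =
    εK ⊗ₜ[ℂ] mLin x + αK ⊗ₜ[ℂ] mLin (uA * (x * uAᴴ)) + βK ⊗ₜ[ℂ] mLin (uB * (x * uBᴴ))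
    + γK ⊗ₜ[ℂ] mLin (uC * (x * uCᴴ)) + mLin x ⊗ₜ[ℂ] εK
    + mLin (cconj uA * (x * (cconj uA)ᴴ)) ⊗ₜ[ℂ] αK
    + mLin (cconj uB * (x * (cconj uB)ᴴ)) ⊗ₜ[ℂ] βK
    + mLin (cconj uC * (x * (cconj uC)ᴴ)) ⊗ₜ[ℂ] γK := by
  simp [ΔM, conjBy, LinearMap.add_apply, LinearMap.comp_apply, TensorProduct.mk_apply,
    LinearMap.flip_apply, LinearMap.mulLeft_apply, LinearMap.mulRight_apply]

lemma conjA_one : uA * ((1 : M2) * uAᴴ) = 1 := by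
  ext i j; fin_cases i <;> fin_cases j <;>
    simp [uA, Matrix.mul_apply, Matrix.vecMul, dotProduct, Matrix.conjTranspose_apply, Matrix.map_apply, Fin.sum_univ_two, Matrix.one_apply, Complex.ext_iff]
lemma conjB_one : uB * ((1 : M2) * uBᴴ) = 1 := by
  ext i j; fin_cases i <;> fin_cases j <;>
    simp [uB, Matrix.mul_apply, Matrix.vecMul, dotProduct, Matrix.conjTranspose_apply, Matrix.map_apply, Fin.sum_univ_two, Matrix.one_apply, Complex.ext_iff]
lemma conjC_one : uC * ((1 : M2) * uCᴴ) = 1 := by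
  ext i j; fin_cases i <;> fin_cases j <;>
    simp [uC, Matrix.mul_apply, Matrix.vecMul, dotProduct, Matrix.conjTranspose_apply, Matrix.map_apply, Fin.sum_univ_two, Matrix.one_apply, Complex.ext_iff]
lemma conjA'_one : cconj uA * ((1 : M2) * (cconj uA)ᴴ) = 1 := by
  ext i j; fin_cases i <;> fin_cases j <;>
    simp [uA, cconj, Matrix.mul_apply, Matrix.vecMul, dotProduct, Matrix.conjTranspose_apply, Matrix.map_apply, Fin.sum_univ_two, Matrix.one_apply, Complex.ext_iff]
lemma conjB'_one : cconj uB * ((1 : M2) * (cconj uB)ᴴ) = 1 := by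
  ext i j; fin_cases i <;> fin_cases j <;>
    simp [uB, cconj, Matrix.mul_apply, Matrix.vecMul, dotProduct, Matrix.conjTranspose_apply, Matrix.map_apply, Fin.sum_univ_two, Matrix.one_apply, Complex.ext_iff]
lemma conjC'_one : cconj uC * ((1 : M2) * (cconj uC)ᴴ) = 1 := by
  ext i j; fin_cases i <;> fin_cases j <;>
    simp [uC, cconj, Matrix.mul_apply, Matrix.vecMul, dotProduct, Matrix.conjTranspose_apply, Matrix.map_apply, Fin.sum_univ_two, Matrix.one_apply, Complex.ext_iff]

lemma conjA_d : uA * (dK * uAᴴ) = -dK := by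
  ext i j; fin_cases i <;> fin_cases j <;>
    simp [uA, dK, Matrix.mul_apply, Matrix.vecMul, dotProduct, Matrix.conjTranspose_apply, Matrix.map_apply, Fin.sum_univ_two, Complex.ext_iff]
lemma conjB_d : uB * (dK * uBᴴ) = -dK := by
  ext i j; fin_cases i <;> fin_cases j <;>
    simp [uB, dK, Matrix.mul_apply, Matrix.vecMul, dotProduct, Matrix.conjTranspose_apply, Matrix.map_apply, Fin.sum_univ_two, Complex.ext_iff]
lemma conjC_d : uC * (dK * uCᴴ) = dK := by
  ext i j; fin_cases i <;> fin_cases j <;>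
    simp [uC, dK, Matrix.mul_apply, Matrix.vecMul, dotProduct, Matrix.conjTranspose_apply, Matrix.map_apply, Fin.sum_univ_two, Complex.ext_iff]
lemma conjA'_d : cconj uA * (dK * (cconj uA)ᴴ) = -dK := by
  ext i j; fin_cases i <;> fin_cases j <;>
    simp [uA, cconj, dK, Matrix.mul_apply, Matrix.vecMul, dotProduct, Matrix.conjTranspose_apply, Matrix.map_apply, Fin.sum_univ_two, Complex.ext_iff]
lemma conjB'_d : cconj uB * (dK * (cconj uB)ᴴ) = -dK := by
  ext i j; fin_cases i <;> fin_cases j <;>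
    simp [uB, cconj, dK, Matrix.mul_apply, Matrix.vecMul, dotProduct, Matrix.conjTranspose_apply, Matrix.map_apply, Fin.sum_univ_two, Complex.ext_iff]
lemma conjC'_d : cconj uC * (dK * (cconj uC)ᴴ) = dK := by
  ext i j; fin_cases i <;> fin_cases j <;>
    simp [uC, cconj, dK, Matrix.mul_apply, Matrix.vecMul, dotProduct, Matrix.conjTranspose_apply, Matrix.map_apply, Fin.sum_univ_two, Complex.ext_iff]

lemma mLin_one : mLin 1 = εKij 0 0 + εKij 1 1 := by
  simp only [εKij, mLin, LinearMap.coe_mk, AddHom.coe_mk, Prod.mk_add_mk, add_zero]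
  congr 4
  ext i j; fin_cases i <;> fin_cases j <;>
    simp [eM, Matrix.one_apply, Matrix.single]
lemma mLin_d : mLin dK = εKij 0 0 - εKij 1 1 := by
  simp only [εKij, mLin, LinearMap.coe_mk, AddHom.coe_mk, Prod.mk_sub_mk, sub_zero]
  congr 4
  ext i j; fin_cases i <;> fin_cases j <;>
    simp [eM, dK, Matrix.single]

lemma u1_dec : u1K = εK + αK + βK + γK + (εKij 0 0 + εKij 1 1) := by
  simp only [u1K, εK, αK, βK, γK, εKij, Prod.mk_add_mk, add_zero, zero_add]
  congr 1; congr 1; congr 1; congr 1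
  ext i j; fin_cases i <;> fin_cases j <;>
    simp [eM, Matrix.one_apply, Matrix.single]
lemma glike1 : ΔKP u1K = u1K ⊗ₜ[ℂ] u1K := by
  have hL : ΔKP u1K = Dε + Dα + Dβ + Dγ + ΔM 1 := by
    simp [ΔKP, LinearMap.add_apply, LinearMap.smulRight_apply, LinearMap.comp_apply,
      pε, pα, pβ, pγ, pM, u1K, LinearMap.fst_apply, LinearMap.snd_apply, one_smul]
  rw [hL, ΔM_apply, conjA_one, conjB_one, conjC_one, conjA'_one, conjB'_one, conjC'_one,
    mLin_one, u1_dec]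
  simp only [Dε, Dα, Dβ, Dγ, tmul_add, add_tmul, tmul_sub, sub_tmul, smul_tmul', tmul_smul]
  module
lemma u2_dec : u2K = εK - αK - βK + γK + (εKij 0 0 - εKij 1 1) := by
  simp only [u2K, εK, αK, βK, γK, εKij, Prod.mk_add_mk, Prod.mk_sub_mk, add_zero, zero_add,
    zero_sub, sub_zero]
  congr 1; congr 1; congr 1; congr 1
  ext i j; fin_cases i <;> fin_cases j <;> simp [eM, Matrix.single]

lemma u3_dec : u3K = εK + αK + βK + γK - (εKij 0 0 + εKij 1 1) := by
  simp only [u3K, εK, αK, βK, γK, εKij, Prod.mk_add_mk, Prod.mk_sub_mk, add_zero, zero_add,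
    zero_sub, sub_zero]
  congr 1; congr 1; congr 1; congr 1
  ext i j; fin_cases i <;> fin_cases j <;>
    simp [eM, Matrix.one_apply, Matrix.single]

lemma u4_dec : u4K = εK - αK - βK + γK - (εKij 0 0 - εKij 1 1) := by
  simp only [u4K, εK, αK, βK, γK, εKij, Prod.mk_add_mk, Prod.mk_sub_mk, add_zero, zero_add,
    zero_sub, sub_zero]
  congr 1; congr 1; congr 1; congr 1
  ext i j; fin_cases i <;> fin_cases j <;> simp [eM, Matrix.single]

lemma glike2 : ΔKP u2K = u2K ⊗ₜ[ℂ] u2K := by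
  have hL : ΔKP u2K = Dε - Dα - Dβ + Dγ + ΔM dK := by
    simp [ΔKP, dK, LinearMap.add_apply, LinearMap.smulRight_apply, LinearMap.comp_apply,
      pε, pα, pβ, pγ, pM, u2K, LinearMap.fst_apply, LinearMap.snd_apply, one_smul, neg_smul,
      sub_eq_add_neg]
  rw [hL, ΔM_apply, conjA_d, conjB_d, conjC_d, conjA'_d, conjB'_d, conjC'_d]
  rw [map_neg, mLin_d, u2_dec]
  simp only [Dε, Dα, Dβ, Dγ, tmul_add, add_tmul, tmul_sub, sub_tmul, neg_tmul, tmul_neg, smul_tmul', tmul_smul]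
  module

lemma glike3 : ΔKP u3K = u3K ⊗ₜ[ℂ] u3K := by
  have hL : ΔKP u3K = Dε + Dα + Dβ + Dγ + ΔM (-1) := by
    simp [ΔKP, LinearMap.add_apply, LinearMap.smulRight_apply, LinearMap.comp_apply,
      pε, pα, pβ, pγ, pM, u3K, LinearMap.fst_apply, LinearMap.snd_apply, one_smul]
  rw [hL, map_neg, ΔM_apply, conjA_one, conjB_one, conjC_one, conjA'_one, conjB'_one,
    conjC'_one, mLin_one, u3_dec]
  simp only [Dε, Dα, Dβ, Dγ, tmul_add, add_tmul, tmul_sub, sub_tmul, neg_tmul, tmul_neg, smul_tmul', tmul_smul]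
  module

lemma glike4 : ΔKP u4K = u4K ⊗ₜ[ℂ] u4K := by
  have hL : ΔKP u4K = Dε - Dα - Dβ + Dγ + ΔM (-dK) := by
    simp [ΔKP, LinearMap.add_apply, LinearMap.smulRight_apply, LinearMap.comp_apply,
      pε, pα, pβ, pγ, pM, u4K, LinearMap.fst_apply, LinearMap.snd_apply, one_smul, neg_smul,
      sub_eq_add_neg, dK_neg]
  rw [hL, map_neg, ΔM_apply, conjA_d, conjB_d, conjC_d, conjA'_d, conjB'_d, conjC'_d]
  rw [map_neg, mLin_d, u4_dec]
  simp only [Dε, Dα, Dβ, Dγ, tmul_add, add_tmul, tmul_sub, sub_tmul, neg_tmul, tmul_neg, smul_tmul', tmul_smul]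
  module

/-- The four 1-dimensional corepresentations `u₁, u₂, u₃, u₄` of the
Kac–Paljutkin algebra are group-like for `Δ_KP`, and each is a self-adjoint unitary. -/
theorem KacPaljutkin_one_dimensional_corepresentations_grouplike :
    ΔKP u1K = u1K ⊗ₜ[ℂ] u1K ∧
    ΔKP u2K = u2K ⊗ₜ[ℂ] u2K ∧
    ΔKP u3K = u3K ⊗ₜ[ℂ] u3K ∧
    ΔKP u4K = u4K ⊗ₜ[ℂ] u4K ∧
    star u1K = u1K ∧ star u2K = u2K ∧ star u3K = u3K ∧ star u4K = u4K ∧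
    u1K * u1K = 1 ∧ u2K * u2K = 1 ∧ u3K * u3K = 1 ∧ u4K * u4K = 1 := by
  refine ⟨glike1, glike2, glike3, glike4, ?_, ?_, ?_, ?_, ?_, ?_, ?_, ?_⟩
  all_goals
    simp only [u1K, u2K, u3K, u4K, Prod.star_def, Prod.mk_mul_mk, Prod.mk.injEq,
      Prod.ext_iff, Prod.fst_one, Prod.snd_one, star_one, one_mul, mul_one, neg_mul,
      mul_neg, neg_neg, star_neg]
  all_goals constructorm* _ ∧ _
  all_goals first
    | (norm_num; done)
    | (ext i j; fin_cases i <;> fin_cases j <;>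
        simp [Matrix.mul_apply, Fin.sum_univ_two, Matrix.star_apply, Matrix.one_apply,
          Complex.ext_iff])
end
end
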